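/- Set n_k = k^{2k}, v_k = n_{k+1} − n_k, v'_k = v_k (1 − a_{n_{k+1}}), and u_k = (4 log₂(v_k) / (n_{k+1} a_{n_{k+1}}))^{1/2}. Assume (a_n) are positive reals with n a_n nondecreasing to ∞, a_n nonincreasing to 0, a_n log₂ n → 0, and n a_n/(log₂ n)^{7/3} → ∞. Let Y_k have Poisson distribution with mean v'_k. Then (2π v_k)^{1/2} · P( Y_k = ⌊v'_k − v_k a_{n_{k+1}} u_k⌋ ) → 1 as k → ∞. -/

import Mathlib

open MeasureTheory ProbabilityTheory Filter

/-- `llog u = log (log (u ⊔ e))`. -/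
noncomputable def llog (x : ℝ) : ℝ := Real.log (Real.log (max x (Real.exp 1)))

/-- Sup-norm over `[0,1]`. -/
noncomputable def supNorm (f : ℝ → ℝ) : ℝ := ⨆ t : Set.Icc (0:ℝ) 1, |f t|

/-- Membership in the Strassen set `S₁`. -/
def InStrassen1 (f : ℝ → ℝ) : Prop :=
  ∃ f' : ℝ → ℝ, Measurable f' ∧
    (∀ x ∈ Set.Icc (0:ℝ) 1, f x = ∫ t in (0:ℝ)..x, f' t) ∧
    (∫ t in (0:ℝ)..1, (f' t) ^ 2) ≤ 1

/-- Membership in `S₂ = {f ∈ S₁ : f 1 = 0}`. -/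
def InStrassen2 (f : ℝ → ℝ) : Prop := InStrassen1 f ∧ f 1 = 0

variable {Ω : Type*} [MeasurableSpace Ω]

/-- Empirical distribution function `F_n`. -/
noncomputable def empF (U : ℕ → Ω → ℝ) (n : ℕ) (t : ℝ) (ω : Ω) : ℝ :=
  (Set.ncard {i : ℕ | i < n ∧ U i ω ≤ t} : ℝ) / n

/-- Uniform empirical process `α_n(t) = √n (F_n(t) - t)`. -/
noncomputable def empProc (U : ℕ → Ω → ℝ) (n : ℕ) (t : ℝ) (ω : Ω) : ℝ :=
  Real.sqrt n * (empF U n t ω - t)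

/-- `H_n(t) = n (F_n(t) - t)`. -/
noncomputable def empH (U : ℕ → Ω → ℝ) (n : ℕ) (t : ℝ) (ω : Ω) : ℝ :=
  (n : ℝ) * (empF U n t ω - t)

/-- The generalized inverse `F_n⁻¹(t) = inf {u : F_n(u) ≥ t}`. -/
noncomputable def empQF (U : ℕ → Ω → ℝ) (n : ℕ) (t : ℝ) (ω : Ω) : ℝ :=
  sInf {u : ℝ | t ≤ empF U n u ω}

/-- Uniform quantile process `β_n(t) = √n (F_n⁻¹(t) - t)`. -/
noncomputable def quantProc (U : ℕ → Ω → ℝ) (n : ℕ) (t : ℝ) (ω : Ω) : ℝ :=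
  Real.sqrt n * (empQF U n t ω - t)

/-- `(U_i)` are i.i.d. uniform on `[0,1]`. -/
def IsUniformIID (μ : Measure Ω) (U : ℕ → Ω → ℝ) : Prop :=
  (∀ i, Measurable (U i)) ∧
  iIndepFun U μ ∧
  (∀ i, Measure.map (U i) μ = MeasureTheory.volume.restrict (Set.Icc (0:ℝ) 1))

/-- `n_k = k^{2k}`. -/
def nk (k : ℕ) : ℕ := k ^ (2 * k)

/-- `v_k = n_{k+1} - n_k`. -/
def vk (k : ℕ) : ℕ := nk (k + 1) - nk k

/-- The Poisson probability `P(X = l)` for a Poisson random variable with mean `m`. -/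
noncomputable def poissonProb (m : ℝ) (l : ℕ) : ℝ :=
  Real.exp (-m) * m ^ l / (Nat.factorial l)

/-- `u_k = (4 log₂ v_k / (n_{k+1} a_{n_{k+1}}))^{1/2}`. -/
noncomputable def uk (a : ℕ → ℝ) (k : ℕ) : ℝ :=
  Real.sqrt (4 * llog (vk k) / ((nk (k + 1) : ℝ) * a (nk (k + 1))))

/- ===================== auxiliary lemmas ===================== -/

lemma my_llog_nonneg (x : ℝ) : 0 ≤ llog x := by
  have h1 : (1:ℝ) ≤ Real.log (max x (Real.exp 1)) := by
    calc (1:ℝ) = Real.log (Real.exp 1) := (Real.log_exp 1).symm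
    _ ≤ Real.log (max x (Real.exp 1)) :=
      Real.log_le_log (Real.exp_pos 1) (le_max_right _ _)
  exact Real.log_nonneg h1

lemma my_llog_mono {x y : ℝ} (h : x ≤ y) : llog x ≤ llog y := by
  have h1 : (1:ℝ) ≤ Real.log (max x (Real.exp 1)) := by
    calc (1:ℝ) = Real.log (Real.exp 1) := (Real.log_exp 1).symm
    _ ≤ Real.log (max x (Real.exp 1)) :=
      Real.log_le_log (Real.exp_pos 1) (le_max_right _ _)
  unfold llog
  refine Real.log_le_log (lt_of_lt_of_le one_pos h1) ?_
  exact Real.log_le_log (lt_of_lt_of_le (Real.exp_pos 1) (le_max_right _ _))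
    (max_le_max h le_rfl)

lemma my_llog_one_le {x : ℝ} (h : Real.exp (Real.exp 1) ≤ x) : 1 ≤ llog x := by
  have h2 : Real.exp (Real.exp 1) ≤ max x (Real.exp 1) := le_trans h (le_max_left _ _)
  have h3 : Real.exp 1 ≤ Real.log (max x (Real.exp 1)) := by
    rw [Real.le_log_iff_exp_le (lt_of_lt_of_le (Real.exp_pos _) h2)]
    exact h2
  calc (1:ℝ) = Real.log (Real.exp 1) := (Real.log_exp 1).symm
  _ ≤ llog x := Real.log_le_log (Real.exp_pos 1) h3

lemma my_nk_succ_ge (k : ℕ) : k + 1 ≤ nk (k+1) := by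
  unfold nk
  calc k + 1 = (k+1)^1 := (pow_one _).symm
  _ ≤ (k+1)^(2*(k+1)) := Nat.pow_le_pow_right (Nat.succ_le_succ (Nat.zero_le k)) (by omega)

lemma my_vk_ge {k : ℕ} (hk : 2 ≤ k) : k ≤ vk k := by
  unfold vk
  have e1 : k^(2*k) * k^2 ≤ (k+1)^(2*(k+1)) := by
    calc k^(2*k) * k^2 = k^(2*k+2) := by ring
    _ ≤ (k+1)^(2*k+2) := Nat.pow_le_pow_left (Nat.le_succ k) _
    _ = (k+1)^(2*(k+1)) := by ring_nf
  have hk1 : k ≤ k^(2*k) := by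
    calc k = k^1 := (pow_one k).symm
    _ ≤ k^(2*k) := Nat.pow_le_pow_right (by omega) (by omega)
  have e2 : k ^ (2*k) + k ≤ k^(2*k) * k^2 := by
    have h2 : 2 ≤ k^2 := by nlinarith
    calc k^(2*k) + k ≤ k^(2*k) + k^(2*k) := by omega
    _ = k^(2*k) * 2 := by ring
    _ ≤ k^(2*k) * k^2 := Nat.mul_le_mul_left _ h2
  have h1 : nk k + k ≤ nk (k+1) := by unfold nk; omega
  omega

/-- `m_k = v'_k`, the Poisson mean. -/
noncomputable def auxM (a : ℕ → ℝ) (k : ℕ) : ℝ := (vk k : ℝ) * (1 - a (nk (k+1)))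

/-- `D_k = v_k a_{n_{k+1}} u_k`. -/
noncomputable def auxD (a : ℕ → ℝ) (k : ℕ) : ℝ := (vk k : ℝ) * a (nk (k+1)) * uk a k

/-- The integer where we evaluate the Poisson pmf. -/
noncomputable def auxL (a : ℕ → ℝ) (k : ℕ) : ℕ := ⌊auxM a k - auxD a k⌋₊

/-- The asymptotic comparison function. -/
noncomputable def auxF (a : ℕ → ℝ) (k : ℕ) : ℝ :=
  Real.sqrt ((vk k : ℝ) / (auxL a k)) *
    (Real.sqrt Real.pi / Stirling.stirlingSeq (auxL a k)) *
    Real.exp ((auxL a k : ℝ) - auxM a k +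
      (auxL a k : ℝ) * Real.log (auxM a k / (auxL a k : ℝ)))

lemma aux_bounds (a : ℕ → ℝ) (k : ℕ) (hε_pos : 0 < a (nk (k+1)))
    (hV8 : (8:ℝ) ≤ (vk k : ℝ)) (hε8 : a (nk (k+1)) ≤ 1/8)
    (hεu8 : a (nk (k+1)) * uk a k ≤ 1/8) :
    (vk k : ℝ)/2 ≤ (auxL a k : ℝ) ∧ (auxL a k : ℝ) ≤ auxM a k - auxD a k ∧
      auxM a k - auxD a k - 1 < (auxL a k : ℝ) ∧ 1 ≤ auxL a k ∧ 0 < auxM a k ∧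
      0 ≤ auxD a k ∧ (vk k : ℝ)/2 ≤ auxM a k := by
  have hV0 : (0:ℝ) < (vk k : ℝ) := by linarith
  have hu0 : 0 ≤ uk a k := Real.sqrt_nonneg _
  have hD0 : 0 ≤ auxD a k := by
    unfold auxD; positivity
  have hmD : (3/4 : ℝ) * (vk k : ℝ) ≤ auxM a k - auxD a k := by
    unfold auxM auxD
    have h1 : (vk k:ℝ) * a (nk (k+1)) ≤ (vk k:ℝ) * (1/8) :=
      mul_le_mul_of_nonneg_left hε8 hV0.le
    have h2 : (vk k:ℝ) * (a (nk (k+1)) * uk a k) ≤ (vk k:ℝ) * (1/8) :=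
      mul_le_mul_of_nonneg_left hεu8 hV0.le
    nlinarith
  have hC3 : auxM a k - auxD a k - 1 < (auxL a k : ℝ) := Nat.sub_one_lt_floor _
  have hC2 : (auxL a k : ℝ) ≤ auxM a k - auxD a k :=
    Nat.floor_le (by linarith)
  have hC1 : (vk k : ℝ)/2 ≤ (auxL a k : ℝ) := by linarith
  have hC4 : 1 ≤ auxL a k := by
    have : (1:ℝ) ≤ (auxL a k : ℝ) := by linarith
    exact_mod_cast this
  have hC5 : 0 < auxM a k := by
    have : auxM a k - auxD a k ≤ auxM a k := by linarith
    linarith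
  have hC7 : (vk k : ℝ)/2 ≤ auxM a k := by
    have : auxM a k - auxD a k ≤ auxM a k := by linarith
    linarith
  exact ⟨hC1, hC2, hC3, hC4, hC5, hD0, hC7⟩

lemma aux_eq (a : ℕ → ℝ) (k : ℕ) (hp1 : 1 ≤ auxL a k) (hm : 0 < auxM a k)
    (hV : (0:ℝ) < (vk k : ℝ)) :
    Real.sqrt (2 * Real.pi * (vk k : ℝ)) * poissonProb (auxM a k) (auxL a k)
      = auxF a k := by
  set p := auxL a k with hp
  set m := auxM a k with hm'
  set V := (vk k : ℝ) with hV'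
  have hLpos : (0:ℝ) < (p:ℝ) := by exact_mod_cast hp1
  obtain ⟨p', hp'⟩ : ∃ p', p = p' + 1 := ⟨p - 1, by omega⟩
  have hs : 0 < Stirling.stirlingSeq p := hp' ▸ Stirling.stirlingSeq'_pos p'
  have hden : (0:ℝ) < Real.sqrt (2*(p:ℝ)) * (((p:ℝ)/Real.exp 1))^p := by
    have : (0:ℝ) < Real.sqrt (2*(p:ℝ)) := Real.sqrt_pos.2 (by linarith)
    positivity
  have hfac : (Nat.factorial p : ℝ) = Stirling.stirlingSeq p *
      (Real.sqrt (2*(p:ℝ)) * (((p:ℝ)/Real.exp 1))^p) := by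
    simp only [Stirling.stirlingSeq]
    field_simp
  have hexp : Real.exp ((p:ℝ) - m + (p:ℝ) * Real.log (m/(p:ℝ)))
      = Real.exp (-m) * Real.exp (p:ℝ) * (m/(p:ℝ))^p := by
    rw [show (p:ℝ) - m + (p:ℝ)*Real.log (m/(p:ℝ))
        = -m + (p:ℝ) + (p:ℝ)*Real.log (m/(p:ℝ)) by ring]
    rw [Real.exp_add, Real.exp_add, Real.exp_nat_mul,
      Real.exp_log (by positivity : (0:ℝ) < m/(p:ℝ))]
  have hLe : (((p:ℝ)/Real.exp 1))^p = (p:ℝ)^p / Real.exp (p:ℝ) := by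
    rw [div_pow, ← Real.exp_nat_mul, mul_one]
  have hsqrt : Real.sqrt (2 * Real.pi * V)
      = Real.sqrt Real.pi * Real.sqrt (V/(p:ℝ)) * Real.sqrt (2*(p:ℝ)) := by
    rw [← Real.sqrt_mul Real.pi_pos.le, ← Real.sqrt_mul (by positivity)]
    congr 1
    field_simp
  unfold auxF poissonProb
  rw [← hp, ← hm', ← hV', hfac, hexp, hsqrt, hLe, div_pow]
  have h1 : Real.sqrt (2*(p:ℝ)) ≠ 0 := ne_of_gt (Real.sqrt_pos.2 (by linarith))
  have h2 : Stirling.stirlingSeq p ≠ 0 := ne_of_gt hs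
  have h3 : ((p:ℝ))^p ≠ 0 := by positivity
  have h4 : Real.exp ((p:ℝ)) ≠ 0 := (Real.exp_pos _).ne'
  field_simp

theorem statement (a : ℕ → ℝ) (ha_pos : ∀ n, 0 < a n)
    (hna_mono : Monotone (fun n : ℕ => (n : ℝ) * a n))
    (hna_top : Tendsto (fun n : ℕ => (n : ℝ) * a n) atTop atTop)
    (ha_anti : Antitone a) (ha_lim : Tendsto a atTop (nhds 0))
    (halog : Tendsto (fun n : ℕ => a n * llog n) atTop (nhds 0))
    (h73 : Tendsto (fun n : ℕ => (n : ℝ) * a n / llog n ^ ((7:ℝ)/3)) atTop atTop) :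
    Tendsto (fun k : ℕ => Real.sqrt (2 * Real.pi * (vk k : ℝ)) *
      poissonProb ((vk k : ℝ) * (1 - a (nk (k + 1))))
        ⌊(vk k : ℝ) * (1 - a (nk (k + 1))) - (vk k : ℝ) * a (nk (k + 1)) * uk a k⌋₊)
      atTop (nhds 1) := by
  have pi_pos := Real.pi_pos
  -- basic divergence facts
  have hNtop : Tendsto (fun k => nk (k+1)) atTop atTop :=
    tendsto_atTop_mono (fun k => Nat.le_of_succ_le (my_nk_succ_ge k)) tendsto_id
  have hvtop : Tendsto vk atTop atTop :=
    tendsto_atTop_mono' atTop (eventually_atTop.2 ⟨2, fun k hk => my_vk_ge hk⟩) tendsto_id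
  have hVtop : Tendsto (fun k => (vk k : ℝ)) atTop atTop :=
    tendsto_natCast_atTop_atTop.comp hvtop
  have hNR : Tendsto (fun k => ((nk (k+1) : ℕ) : ℝ)) atTop atTop :=
    tendsto_natCast_atTop_atTop.comp hNtop
  have hε0 : Tendsto (fun k => a (nk (k+1))) atTop (nhds 0) := ha_lim.comp hNtop
  have hεllog : Tendsto (fun k => a (nk (k+1)) * llog (nk (k+1))) atTop (nhds 0) :=
    halog.comp hNtop
  have h73' : Tendsto (fun k => ((nk (k+1):ℕ):ℝ) * a (nk (k+1)) /
      llog (nk (k+1)) ^ ((7:ℝ)/3)) atTop atTop := h73.comp hNtop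
  have hVN : ∀ k, (vk k : ℝ) ≤ ((nk (k+1) : ℕ) : ℝ) := by
    intro k; exact_mod_cast Nat.sub_le _ _
  -- the quantity inside the square root of u_k tends to zero
  have hq0 : Tendsto (fun k => 4 * llog (vk k) / (((nk (k+1):ℕ):ℝ) * a (nk (k+1))))
      atTop (nhds 0) := by
    have hr : Tendsto (fun k => 4 * (((nk (k+1):ℕ):ℝ) * a (nk (k+1)) /
        llog (nk (k+1)) ^ ((7:ℝ)/3))⁻¹) atTop (nhds 0) := by
      have h := h73'.inv_tendsto_atTop
      have := h.const_mul (4:ℝ)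
      simpa using this
    refine squeeze_zero' ?_ ?_ hr
    · filter_upwards [hNtop.eventually_ge_atTop 1] with k hk
      have hN0 : (0:ℝ) < ((nk (k+1):ℕ):ℝ) := by exact_mod_cast hk
      have hε := ha_pos (nk (k+1))
      have hll : 0 ≤ llog ((vk k:ℕ):ℝ) := my_llog_nonneg _
      have hNε : (0:ℝ) < ((nk (k+1):ℕ):ℝ) * a (nk (k+1)) := by positivity
      exact div_nonneg (by linarith) hNε.le
    · filter_upwards [hNR.eventually_ge_atTop (Real.exp (Real.exp 1))] with k hk
      have hll1 : 1 ≤ llog ((nk (k+1):ℕ):ℝ) := my_llog_one_le hk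
      have hN0 : (0:ℝ) < ((nk (k+1):ℕ):ℝ) :=
        lt_of_lt_of_le (Real.exp_pos _) hk
      have hε := ha_pos (nk (k+1))
      have hNε : (0:ℝ) < ((nk (k+1):ℕ):ℝ) * a (nk (k+1)) := by positivity
      have hllV : llog (vk k) ≤ llog ((nk (k+1):ℕ):ℝ) := my_llog_mono (hVN k)
      have hpow : llog ((nk (k+1):ℕ):ℝ) ≤ llog ((nk (k+1):ℕ):ℝ) ^ ((7:ℝ)/3) := by
        calc llog ((nk (k+1):ℕ):ℝ) = llog ((nk (k+1):ℕ):ℝ) ^ (1:ℝ) := (Real.rpow_one _).symm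
        _ ≤ _ := Real.rpow_le_rpow_of_exponent_le hll1 (by norm_num)
      rw [inv_div, mul_div_assoc]
      refine mul_le_mul_of_nonneg_left ?_ (by norm_num)
      exact (div_le_div_iff_of_pos_right hNε).mpr (by linarith)
  have hu0 : Tendsto (uk a) atTop (nhds 0) := by
    have h := (Real.continuous_sqrt.tendsto 0).comp hq0
    rw [Real.sqrt_zero] at h
    exact h
  have hεu0 : Tendsto (fun k => a (nk (k+1)) * uk a k) atTop (nhds 0) := by
    simpa using hε0.mul hu0
  have hinvV : Tendsto (fun k => 1 / (vk k : ℝ)) atTop (nhds 0) := by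
    simpa [one_div, Pi.inv_def] using hVtop.inv_tendsto_atTop
  -- D/V → 0
  have hDV : Tendsto (fun k => auxD a k / (vk k : ℝ)) atTop (nhds 0) := by
    refine hεu0.congr' ?_
    filter_upwards [hVtop.eventually_ge_atTop 1] with k hk
    have hV0 : (vk k : ℝ) ≠ 0 := by linarith
    unfold auxD
    field_simp
  -- D²/V → 0
  have hD2V : Tendsto (fun k => (auxD a k)^2 / (vk k : ℝ)) atTop (nhds 0) := by
    have hr : Tendsto (fun k => 4 * (a (nk (k+1)) * llog (nk (k+1)))) atTop (nhds 0) := by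
      have := hεllog.const_mul (4:ℝ)
      simpa using this
    refine squeeze_zero' ?_ ?_ hr
    · filter_upwards [hVtop.eventually_ge_atTop 1] with k hk
      have hV0 : (0:ℝ) < (vk k : ℝ) := by linarith
      positivity
    · filter_upwards [hVtop.eventually_ge_atTop 1, hNtop.eventually_ge_atTop 1] with k hk hN
      have hV0 : (0:ℝ) < (vk k : ℝ) := by linarith
      have hN0 : (0:ℝ) < ((nk (k+1):ℕ):ℝ) := by exact_mod_cast hN
      have hε := ha_pos (nk (k+1))
      have hu2 : uk a k ^ 2 = 4 * llog (vk k) / (((nk (k+1):ℕ):ℝ) * a (nk (k+1))) := by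
        unfold uk
        rw [Real.sq_sqrt]
        have := my_llog_nonneg ((vk k : ℕ):ℝ)
        positivity
      have hkey : (auxD a k)^2 / (vk k : ℝ)
          = 4 * a (nk (k+1)) * llog (vk k) * ((vk k : ℝ) / ((nk (k+1):ℕ):ℝ)) := by
        unfold auxD
        rw [mul_pow, mul_pow, hu2]
        field_simp
      rw [hkey]
      have hllV : llog (vk k) ≤ llog ((nk (k+1):ℕ):ℝ) := my_llog_mono (hVN k)
      have hll0 : 0 ≤ llog ((vk k : ℕ):ℝ) := my_llog_nonneg _
      have hr1 : (vk k : ℝ) / ((nk (k+1):ℕ):ℝ) ≤ 1 := by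
        rw [div_le_one hN0]; exact hVN k
      calc 4 * a (nk (k+1)) * llog (vk k) * ((vk k : ℝ) / ((nk (k+1):ℕ):ℝ))
          ≤ 4 * a (nk (k+1)) * llog (vk k) * 1 := by
            have hll0' : 0 ≤ llog ((vk k:ℕ):ℝ) := my_llog_nonneg _
            have h4ε : 0 ≤ 4 * a (nk (k+1)) * llog ((vk k:ℕ):ℝ) := by
              have := (ha_pos (nk (k+1))).le
              positivity
            exact mul_le_mul_of_nonneg_left hr1 h4ε
      _ = 4 * (a (nk (k+1)) * llog (vk k)) := by ring
      _ ≤ 4 * (a (nk (k+1)) * llog ((nk (k+1):ℕ):ℝ)) := by gcongr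
  -- the eventual bounds package
  have hbase : ∀ᶠ k in atTop, (vk k : ℝ)/2 ≤ (auxL a k : ℝ) ∧
      (auxL a k : ℝ) ≤ auxM a k - auxD a k ∧
      auxM a k - auxD a k - 1 < (auxL a k : ℝ) ∧ 1 ≤ auxL a k ∧ 0 < auxM a k ∧
      0 ≤ auxD a k ∧ (vk k : ℝ)/2 ≤ auxM a k := by
    filter_upwards [hVtop.eventually_ge_atTop 8,
      hε0.eventually (eventually_le_nhds (by norm_num : (0:ℝ) < 1/8)),
      hεu0.eventually (eventually_le_nhds (by norm_num : (0:ℝ) < 1/8))] with k h1 h2 h3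
    exact aux_bounds a k (ha_pos _) h1 h2 h3
  -- L/V → 1
  have hLV : Tendsto (fun k => (auxL a k : ℝ) / (vk k : ℝ)) atTop (nhds 1) := by
    have hlow : Tendsto (fun k => 1 - a (nk (k+1)) - a (nk (k+1)) * uk a k - 1/(vk k:ℝ))
        atTop (nhds 1) := by
      have := ((tendsto_const_nhds (x := (1:ℝ))).sub hε0).sub hεu0 |>.sub hinvV
      simpa using this
    have hhigh : Tendsto (fun k => 1 - a (nk (k+1)) - a (nk (k+1)) * uk a k)
        atTop (nhds 1) := by
      have := ((tendsto_const_nhds (x := (1:ℝ))).sub hε0).sub hεu0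
      simpa using this
    refine tendsto_of_tendsto_of_tendsto_of_le_of_le' hlow hhigh ?_ ?_
    · filter_upwards [hbase, hVtop.eventually_ge_atTop 8] with k hb hV8
      obtain ⟨hC1, hC2, hC3, hC4, hC5, hD0, hC7⟩ := hb
      have hV0 : (0:ℝ) < (vk k : ℝ) := by linarith
      have hMD : auxM a k - auxD a k
          = (vk k:ℝ) * (1 - a (nk (k+1)) - a (nk (k+1)) * uk a k) := by
        unfold auxM auxD; ring
      have h1 : (auxM a k - auxD a k - 1) / (vk k:ℝ) ≤ (auxL a k : ℝ)/(vk k:ℝ) :=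
        (div_le_div_iff_of_pos_right hV0).mpr (by linarith)
      calc 1 - a (nk (k+1)) - a (nk (k+1)) * uk a k - 1/(vk k:ℝ)
          = (auxM a k - auxD a k - 1) / (vk k:ℝ) := by
            rw [hMD]; field_simp
      _ ≤ _ := h1
    · filter_upwards [hbase, hVtop.eventually_ge_atTop 8] with k hb hV8
      obtain ⟨hC1, hC2, hC3, hC4, hC5, hD0, hC7⟩ := hb
      have hV0 : (0:ℝ) < (vk k : ℝ) := by linarith
      have hMD : auxM a k - auxD a k
          = (vk k:ℝ) * (1 - a (nk (k+1)) - a (nk (k+1)) * uk a k) := by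
        unfold auxM auxD; ring
      calc (auxL a k : ℝ)/(vk k:ℝ) ≤ (auxM a k - auxD a k)/(vk k:ℝ) :=
            (div_le_div_iff_of_pos_right hV0).mpr hC2
      _ = 1 - a (nk (k+1)) - a (nk (k+1)) * uk a k := by rw [hMD]; field_simp
  -- √(V/L) → 1
  have hVL : Tendsto (fun k => Real.sqrt ((vk k : ℝ) / (auxL a k : ℝ))) atTop (nhds 1) := by
    have h1 : Tendsto (fun k => (vk k : ℝ) / (auxL a k : ℝ)) atTop (nhds 1) := by
      have := hLV.inv₀ one_ne_zero
      simpa [inv_div] using this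
    have h2 := (Real.continuous_sqrt.tendsto 1).comp h1
    rw [Real.sqrt_one] at h2
    exact h2
  -- auxL → ∞
  have hLR : Tendsto (fun k => (auxL a k : ℝ)) atTop atTop := by
    refine tendsto_atTop_mono' atTop ?_ (hVtop.atTop_div_const two_pos)
    filter_upwards [hbase] with k hb
    exact hb.1
  have hltop : Tendsto (auxL a) atTop atTop := tendsto_natCast_atTop_iff.mp hLR
  -- the Stirling factor
  have hst : Tendsto (fun k => Real.sqrt Real.pi / Stirling.stirlingSeq (auxL a k))
      atTop (nhds 1) := by
    have h2 : Tendsto (fun k => Stirling.stirlingSeq (auxL a k)) atTop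
        (nhds (Real.sqrt Real.pi)) := Stirling.tendsto_stirlingSeq_sqrt_pi.comp hltop
    have hπ : Real.sqrt Real.pi ≠ 0 := ne_of_gt (Real.sqrt_pos.2 pi_pos)
    have := (tendsto_const_nhds (x := Real.sqrt Real.pi)).div h2 hπ
    simpa [div_self hπ, Pi.div_def] using this
  -- the exponent → 0
  have hA : Tendsto (fun k => (auxL a k : ℝ) - auxM a k +
      (auxL a k : ℝ) * Real.log (auxM a k / (auxL a k : ℝ))) atTop (nhds 0) := by
    have hB : Tendsto (fun k => -(2*((auxD a k)^2/(vk k:ℝ)) + 4*(auxD a k/(vk k:ℝ))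
        + 2*(1/(vk k:ℝ)))) atTop (nhds 0) := by
      have := ((hD2V.const_mul 2).add (hDV.const_mul 4)).add (hinvV.const_mul 2)
      have := this.neg
      simpa using this
    refine tendsto_of_tendsto_of_tendsto_of_le_of_le' hB tendsto_const_nhds ?_ ?_
    · filter_upwards [hbase, hVtop.eventually_ge_atTop 8] with k hb hV8
      obtain ⟨hC1, hC2, hC3, hC4, hC5, hD0, hC7⟩ := hb
      have hV0 : (0:ℝ) < (vk k : ℝ) := by linarith
      have hL0 : (0:ℝ) < (auxL a k : ℝ) := by linarith
      have hLm : (auxL a k : ℝ) ≤ auxM a k := by linarith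
      have hlog : 1 - (auxM a k / (auxL a k : ℝ))⁻¹ ≤ Real.log (auxM a k / (auxL a k : ℝ)) :=
        Real.one_sub_inv_le_log_of_pos (by positivity)
      have hinv : (auxM a k / (auxL a k : ℝ))⁻¹ = (auxL a k : ℝ) / auxM a k := by
        rw [inv_div]
      rw [hinv] at hlog
      have h5 : (auxL a k : ℝ) * (1 - (auxL a k : ℝ)/auxM a k)
          ≤ (auxL a k : ℝ) * Real.log (auxM a k / (auxL a k : ℝ)) :=
        mul_le_mul_of_nonneg_left hlog hL0.le
      have hmne : auxM a k ≠ 0 := hC5.ne'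
      have hid : (auxL a k : ℝ) - auxM a k + (auxL a k : ℝ) * (1 - (auxL a k : ℝ)/auxM a k)
          = -((auxM a k - (auxL a k : ℝ))^2/auxM a k) := by
        field_simp
        ring
      have hδub : auxM a k - (auxL a k : ℝ) ≤ auxD a k + 1 := by linarith
      have hδlb : 0 ≤ auxM a k - (auxL a k : ℝ) := by linarith
      have hsq : (auxM a k - (auxL a k : ℝ))^2 ≤ (auxD a k + 1)^2 := by nlinarith
      have hδm : (auxM a k - (auxL a k : ℝ))^2 / auxM a k ≤ (auxD a k + 1)^2 / ((vk k:ℝ)/2) := by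
        apply div_le_div₀ (by positivity) hsq (by linarith) hC7
      have hVne : (vk k : ℝ) ≠ 0 := hV0.ne'
      have hexpand : (auxD a k + 1)^2 / ((vk k:ℝ)/2)
          = 2*((auxD a k)^2/(vk k:ℝ)) + 4*(auxD a k/(vk k:ℝ)) + 2*(1/(vk k:ℝ)) := by
        field_simp
        ring
      rw [hexpand] at hδm
      have h6 : -((auxM a k - (auxL a k : ℝ))^2/auxM a k) ≤ (auxL a k : ℝ) - auxM a k +
          (auxL a k : ℝ) * Real.log (auxM a k / (auxL a k : ℝ)) := by
        rw [← hid]; linarith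
      linarith
    · filter_upwards [hbase, hVtop.eventually_ge_atTop 8] with k hb hV8
      obtain ⟨hC1, hC2, hC3, hC4, hC5, hD0, hC7⟩ := hb
      have hV0 : (0:ℝ) < (vk k : ℝ) := by linarith
      have hL0 : (0:ℝ) < (auxL a k : ℝ) := by linarith
      have hlog : Real.log (auxM a k / (auxL a k : ℝ)) ≤ auxM a k / (auxL a k : ℝ) - 1 :=
        Real.log_le_sub_one_of_pos (by positivity)
      have h5 : (auxL a k : ℝ) * Real.log (auxM a k / (auxL a k : ℝ))
          ≤ (auxL a k : ℝ) * (auxM a k / (auxL a k : ℝ) - 1) :=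
        mul_le_mul_of_nonneg_left hlog hL0.le
      have hid : (auxL a k : ℝ) * (auxM a k / (auxL a k : ℝ) - 1)
          = auxM a k - (auxL a k : ℝ) := by
        field_simp
      linarith [hid ▸ h5]
  -- assemble
  have hexpA : Tendsto (fun k => Real.exp ((auxL a k : ℝ) - auxM a k +
      (auxL a k : ℝ) * Real.log (auxM a k / (auxL a k : ℝ)))) atTop (nhds 1) := by
    have h := (Real.continuous_exp.tendsto 0).comp hA
    rw [Real.exp_zero] at h
    exact h
  have hF : Tendsto (auxF a) atTop (nhds 1) := by
    have h := (hVL.mul hst).mul hexpA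
    rw [show (1:ℝ)*1*1 = 1 by norm_num] at h
    exact h
  refine hF.congr' ?_
  filter_upwards [hbase, hVtop.eventually_ge_atTop 8] with k hb hV8
  obtain ⟨hC1, hC2, hC3, hC4, hC5, hD0, hC7⟩ := hb
  have hV0 : (0:ℝ) < (vk k : ℝ) := by linarith
  exact (aux_eq a k hC4 hC5 hV0).symm
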